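/- Let σ : ℝ → ℝ be continuous, bounded, and sigmoidal, i.e., σ(t) → 1 as t → +∞ and σ(t) → 0 as t → −∞. Then for every dimension d ≥ 1, the set of shallow neural network functions x ↦ ∑_{i=1}^m a_i σ(w_i · x + b_i) (over all m ≥ 1, a_i, b_i ∈ ℝ, w_i ∈ ℝ^d) is dense in the space C([0,1]^d, ℝ) of continuous real-valued functions on [0,1]^d equipped with the supremum norm. -/

import Mathlib

open scoped BigOperators

lemma cos_lip (a b : ℝ) : |Real.cos a - Real.cos b| ≤ |a - b| := by
  rw [Real.cos_sub_cos, abs_mul, abs_mul]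
  have s1 : |Real.sin ((a+b)/2)| ≤ 1 := Real.abs_sin_le_one _
  have s2 : |Real.sin ((a-b)/2)| ≤ |(a-b)/2| := Real.abs_sin_le_abs
  have h3 : |(a-b)/2| = |a-b|/2 := by rw [abs_div]; norm_num
  have s2' : |Real.sin ((a-b)/2)| ≤ |a-b|/2 := h3 ▸ s2
  have h2 : |(-2:ℝ)| = 2 := by norm_num
  calc |(-2:ℝ)| * |Real.sin ((a+b)/2)| * |Real.sin ((a-b)/2)|
      ≤ 2 * 1 * (|a-b|/2) := by
        rw [h2]; gcongr
    _ = |a-b| := by ring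

lemma one_dim_approx (σ : ℝ → ℝ)
    (hbdd : ∃ M : ℝ, ∀ t : ℝ, |σ t| ≤ M)
    (hsig_top : Filter.Tendsto σ Filter.atTop (nhds 1))
    (hsig_bot : Filter.Tendsto σ Filter.atBot (nhds 0))
    (b A B : ℝ) (ε : ℝ) (hε : 0 < ε) :
    ∃ (m : ℕ), 1 ≤ m ∧ ∃ (a s c : Fin m → ℝ), ∀ t ∈ Set.Icc A B,
      |Real.cos (t + b) - ∑ i, a i * σ (s i * t + c i)| ≤ ε := by
  classical
  obtain ⟨M, hM⟩ := hbdd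
  have hM0 : 0 ≤ M := le_trans (abs_nonneg _) (hM 0)
  set D : ℝ := max (B - A) 0 with hD
  have hD0 : 0 ≤ D := le_max_right _ _
  set h : ℝ := min 1 (ε / (2 * (M + 2))) with hhdef
  have hh0 : 0 < h := lt_min one_pos (by positivity)
  have hh1 : h ≤ 1 := min_le_left _ _
  have hhε : h * (M + 2) ≤ ε / 2 := by
    have hle : h ≤ ε / (2 * (M + 2)) := min_le_right _ _
    rw [le_div_iff₀ (by positivity)] at hle
    linarith
  set η : ℝ := ε / (2 * (D + 3)) with hηdef
  have hη0 : 0 < η := by positivity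
  have hηD : η * (D + 3) = ε / 2 := by
    rw [hηdef]; field_simp
  obtain ⟨T1, hT1⟩ := Filter.eventually_atTop.mp
    (hsig_top.eventually (Metric.closedBall_mem_nhds (1:ℝ) hη0))
  obtain ⟨T2, hT2⟩ := Filter.eventually_atBot.mp
    (hsig_bot.eventually (Metric.closedBall_mem_nhds (0:ℝ) hη0))
  set T : ℝ := max T1 (max (-T2) 0) with hTdef
  have hT0 : 0 ≤ T := le_trans (le_max_right _ _) (le_max_right _ _)
  have hTop : ∀ v : ℝ, T ≤ v → |σ v - 1| ≤ η := by
    intro v hv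
    have := hT1 v (le_trans (le_max_left _ _) hv)
    simpa [Real.dist_eq] using this
  have hBot : ∀ v : ℝ, v ≤ -T → |σ v| ≤ η := by
    intro v hv
    have h2 : v ≤ T2 := by
      have : -T2 ≤ T := le_trans (le_max_left _ _) (le_max_right _ _)
      linarith
    have := hT2 v h2
    simpa [Real.dist_eq] using this
  set lam : ℝ := 2 * T / h with hlamdef
  have hlam0 : 0 ≤ lam := by positivity
  have hlamh : lam * (h / 2) = T := by
    rw [hlamdef]; field_simp
  set N : ℕ := ⌈(B - A) / h⌉₊ + 1 with hNdef
  have hNh : B - A ≤ (N : ℝ) * h := by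
    have h1 : (B - A) / h ≤ (⌈(B - A) / h⌉₊ : ℝ) := Nat.le_ceil _
    have h2 : ((⌈(B - A) / h⌉₊ : ℝ)) ≤ (N : ℝ) := by
      rw [hNdef]; push_cast; linarith
    rw [div_le_iff₀ hh0] at h1
    nlinarith
  have hNh2 : (N : ℝ) * h ≤ D + 2 := by
    rcases le_or_gt ((B - A) / h) 0 with hx | hx
    · have hz : ⌈(B - A) / h⌉₊ = 0 := Nat.ceil_eq_zero.mpr hx
      rw [hNdef, hz]; push_cast; linarith
    · have h1 : (⌈(B - A) / h⌉₊ : ℝ) < (B - A) / h + 1 := Nat.ceil_lt_add_one hx.le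
      have h2 : (N : ℝ) < (B - A) / h + 2 := by rw [hNdef]; push_cast; linarith
      have h3 : (B - A) / h * h = B - A := div_mul_cancel₀ _ (ne_of_gt hh0)
      have h4 : B - A ≤ D := le_max_left _ _
      nlinarith
  clear_value D h η T lam N
  refine ⟨N + 1, by omega,
    (fun i => if (i : ℕ) = 0 then Real.cos (A + b)
      else Real.cos (A + (i : ℕ) * h + b) - Real.cos (A + ((i : ℕ) - 1 : ℝ) * h + b)),
    (fun _ => lam),
    (fun i => if (i : ℕ) = 0 then lam * (1 - A)
      else -(lam * (A + ((i : ℕ) - (1:ℝ)/2) * h))), ?_⟩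
  intro t ht
  obtain ⟨htA, htB⟩ := ht
  set u : ℝ := (t - A) / h + 1 / 2 with hudef
  have htu : t - A = (u - 1/2) * h := by
    rw [hudef]; field_simp; ring
  have hu0 : 0 ≤ u := by
    have hdiv : 0 ≤ (t - A) / h := div_nonneg (by linarith) hh0.le
    rw [hudef]; linarith
  set j : ℕ := ⌊u⌋₊ with hjdef
  have hjle : (j : ℝ) ≤ u := Nat.floor_le hu0
  have hjlt : u < (j : ℝ) + 1 := Nat.lt_floor_add_one u
  have hjN : j < N := by
    have h1 : (t - A) / h ≤ (B - A) / h := by gcongr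
    have h2 : (B - A) / h ≤ (⌈(B - A) / h⌉₊ : ℝ) := Nat.le_ceil _
    have h3 : u < (N : ℝ) := by
      rw [hNdef]; push_cast; rw [hudef]; linarith
    exact_mod_cast (Nat.floor_lt hu0).mpr h3
  clear_value u j
  have hF : (∑ i : Fin (N+1),
      (if (i : ℕ) = 0 then Real.cos (A + b)
        else Real.cos (A + (i : ℕ) * h + b) - Real.cos (A + ((i : ℕ) - 1 : ℝ) * h + b))
        * σ ((fun _ : Fin (N+1) => lam) i * t + (if (i : ℕ) = 0 then lam * (1 - A)
          else -(lam * (A + ((i : ℕ) - (1:ℝ)/2) * h)))))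
      = Real.cos (A + b) * σ (lam * t + lam * (1 - A))
        + ∑ k ∈ Finset.range N,
          (Real.cos (A + ((k:ℝ) + 1) * h + b) - Real.cos (A + (k:ℝ) * h + b))
            * σ (lam * t + -(lam * (A + ((k:ℝ) + 1/2) * h))) := by
    rw [Fin.sum_univ_eq_sum_range
      (fun i : ℕ => (if i = 0 then Real.cos (A + b)
        else Real.cos (A + (i:ℝ) * h + b) - Real.cos (A + ((i:ℝ) - 1) * h + b))
        * σ (lam * t + (if i = 0 then lam * (1 - A)
          else -(lam * (A + ((i:ℝ) - 1/2) * h))))),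
      Finset.sum_range_succ']
    simp only [if_pos rfl, Nat.succ_ne_zero, if_neg (Nat.succ_ne_zero _)]
    rw [add_comm]
    congr 1
    refine Finset.sum_congr rfl fun x _ => ?_
    simp only [if_false]
    push_cast
    ring_nf
  rw [hF]
  have key : Real.cos (A + (j:ℝ) * h + b) - Real.cos (A + b)
      = ∑ k ∈ Finset.range N, (if k + 1 ≤ j then
          (Real.cos (A + ((k:ℝ)+1) * h + b) - Real.cos (A + (k:ℝ) * h + b)) else 0) := by
    have hsplit : Finset.range N = Finset.range j ∪ Finset.Ico j N := by
      rw [Finset.range_eq_Ico, Finset.range_eq_Ico, Finset.Ico_union_Ico_eq_Ico (Nat.zero_le j) hjN.le]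
    rw [hsplit, Finset.sum_union (by
      rw [Finset.range_eq_Ico]
      exact Finset.Ico_disjoint_Ico_consecutive 0 j N)]
    have h1 : ∑ k ∈ Finset.Ico j N, (if k + 1 ≤ j then
        (Real.cos (A + ((k:ℝ)+1) * h + b) - Real.cos (A + (k:ℝ) * h + b)) else 0) = 0 := by
      apply Finset.sum_eq_zero
      intro k hk
      rw [Finset.mem_Ico] at hk
      rw [if_neg (by omega)]
    have h2 : ∑ k ∈ Finset.range j, (if k + 1 ≤ j then
        (Real.cos (A + ((k:ℝ)+1) * h + b) - Real.cos (A + (k:ℝ) * h + b)) else 0)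
        = Real.cos (A + (j:ℝ) * h + b) - Real.cos (A + b) := by
      rw [Finset.sum_congr rfl (fun k hk => if_pos (by
        rw [Finset.mem_range] at hk; omega))]
      have hts := Finset.sum_range_sub (fun k : ℕ => Real.cos (A + (k:ℝ) * h + b)) j
      calc ∑ k ∈ Finset.range j,
            (Real.cos (A + ((k:ℝ)+1) * h + b) - Real.cos (A + (k:ℝ) * h + b))
          = ∑ k ∈ Finset.range j,
            (Real.cos (A + ((k+1 : ℕ):ℝ) * h + b) - Real.cos (A + (k:ℝ) * h + b)) := by
            apply Finset.sum_congr rfl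
            intro k _
            push_cast
            ring_nf
        _ = Real.cos (A + (j:ℝ) * h + b) - Real.cos (A + ((0:ℕ):ℝ) * h + b) := hts
        _ = Real.cos (A + (j:ℝ) * h + b) - Real.cos (A + b) := by norm_num
    rw [h1, h2]; ring
  -- decomposition
  have e1 : ∀ k : ℕ,
      (Real.cos (A + ((k:ℝ)+1) * h + b) - Real.cos (A + (k:ℝ) * h + b))
        * ((if k + 1 ≤ j then (1:ℝ) else 0) - σ (lam * t + -(lam * (A + ((k:ℝ) + 1/2) * h))))
      = (if k + 1 ≤ j then
          (Real.cos (A + ((k:ℝ)+1) * h + b) - Real.cos (A + (k:ℝ) * h + b)) else 0)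
        - (Real.cos (A + ((k:ℝ)+1) * h + b) - Real.cos (A + (k:ℝ) * h + b))
          * σ (lam * t + -(lam * (A + ((k:ℝ) + 1/2) * h))) := by
    intro k
    by_cases hc : k + 1 ≤ j
    · rw [if_pos hc, if_pos hc]; ring
    · rw [if_neg hc, if_neg hc]; ring
  have hdecomp : Real.cos (t + b) -
      (Real.cos (A + b) * σ (lam * t + lam * (1 - A))
        + ∑ k ∈ Finset.range N,
          (Real.cos (A + ((k:ℝ) + 1) * h + b) - Real.cos (A + (k:ℝ) * h + b))
            * σ (lam * t + -(lam * (A + ((k:ℝ) + 1/2) * h))))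
      = (Real.cos (t + b) - Real.cos (A + (j:ℝ) * h + b))
        + Real.cos (A + b) * (1 - σ (lam * t + lam * (1 - A)))
        + ∑ k ∈ Finset.range N,
          (Real.cos (A + ((k:ℝ)+1) * h + b) - Real.cos (A + (k:ℝ) * h + b))
            * ((if k + 1 ≤ j then (1:ℝ) else 0)
              - σ (lam * t + -(lam * (A + ((k:ℝ) + 1/2) * h)))) := by
    rw [Finset.sum_congr rfl (fun k _ => e1 k), Finset.sum_sub_distrib, ← key]
    ring
  rw [show Real.cos (t + b) = Real.cos (t+b) from rfl]
  calc |Real.cos (t + b) -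
      (Real.cos (A + b) * σ (lam * t + lam * (1 - A))
        + ∑ k ∈ Finset.range N,
          (Real.cos (A + ((k:ℝ) + 1) * h + b) - Real.cos (A + (k:ℝ) * h + b))
            * σ (lam * t + -(lam * (A + ((k:ℝ) + 1/2) * h))))|
      ≤ |Real.cos (t + b) - Real.cos (A + (j:ℝ) * h + b)|
        + |Real.cos (A + b) * (1 - σ (lam * t + lam * (1 - A)))|
        + |∑ k ∈ Finset.range N,
          (Real.cos (A + ((k:ℝ)+1) * h + b) - Real.cos (A + (k:ℝ) * h + b))
            * ((if k + 1 ≤ j then (1:ℝ) else 0)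
              - σ (lam * t + -(lam * (A + ((k:ℝ) + 1/2) * h))))| := by
        rw [hdecomp]
        exact (abs_add_le _ _).trans (add_le_add_left (abs_add_le _ _) _)
    _ ≤ ε := ?_
  clear hF e1 hdecomp key
  -- bound the three terms
  have hX : |Real.cos (t + b) - Real.cos (A + (j:ℝ) * h + b)| ≤ h / 2 := by
    refine (cos_lip _ _).trans ?_
    rw [show t + b - (A + (j:ℝ) * h + b) = (u - 1/2 - (j:ℝ)) * h by
      linear_combination htu]
    rw [abs_mul, abs_of_pos hh0]
    have h5 : |u - 1/2 - (j:ℝ)| ≤ 1/2 :=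
      abs_le.2 ⟨by linarith only [hjle], by linarith only [hjlt]⟩
    calc |u - 1/2 - (j:ℝ)| * h ≤ (1/2) * h := mul_le_mul_of_nonneg_right h5 hh0.le
      _ = h / 2 := by ring
  have hY : |Real.cos (A + b) * (1 - σ (lam * t + lam * (1 - A)))| ≤ η := by
    have harg : T ≤ lam * t + lam * (1 - A) := by
      have h6 : lam * (h/2) ≤ lam * (t + (1 - A)) := by
        apply mul_le_mul_of_nonneg_left ?_ hlam0
        linarith
      calc T = lam * (h/2) := hlamh.symm
        _ ≤ lam * (t + (1 - A)) := h6
        _ = lam * t + lam * (1 - A) := by ring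
    have h7 : |1 - σ (lam * t + lam * (1 - A))| ≤ η := by
      rw [abs_sub_comm]; exact hTop _ harg
    calc |Real.cos (A + b) * (1 - σ (lam * t + lam * (1 - A)))|
        = |Real.cos (A + b)| * |1 - σ (lam * t + lam * (1 - A))| := abs_mul _ _
      _ ≤ 1 * η := mul_le_mul (Real.abs_cos_le_one _) h7 (abs_nonneg _) one_pos.le
      _ = η := one_mul _
  have hZ : |∑ k ∈ Finset.range N,
      (Real.cos (A + ((k:ℝ)+1) * h + b) - Real.cos (A + (k:ℝ) * h + b))
        * ((if k + 1 ≤ j then (1:ℝ) else 0)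
          - σ (lam * t + -(lam * (A + ((k:ℝ) + 1/2) * h))))|
      ≤ h * (M + 1) + (N:ℝ) * (h * η) := by
    refine (Finset.abs_sum_le_sum_abs _ _).trans ?_
    have hterm : ∀ k ∈ Finset.range N,
        |(Real.cos (A + ((k:ℝ)+1) * h + b) - Real.cos (A + (k:ℝ) * h + b))
          * ((if k + 1 ≤ j then (1:ℝ) else 0)
            - σ (lam * t + -(lam * (A + ((k:ℝ) + 1/2) * h))))|
        ≤ if ((k:ℝ) + 1/2 < u ∧ u < (k:ℝ) + 3/2) then h * (M+1) else h * η := by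
      intro k _
      have hΔ : |Real.cos (A + ((k:ℝ)+1) * h + b) - Real.cos (A + (k:ℝ) * h + b)| ≤ h := by
        refine (cos_lip _ _).trans ?_
        rw [show (A + ((k:ℝ)+1) * h + b) - (A + (k:ℝ) * h + b) = h by ring, abs_of_pos hh0]
      have hargk : lam * t + -(lam * (A + ((k:ℝ) + 1/2) * h))
          = lam * h * (u - (k:ℝ) - 1) := by
        linear_combination lam * htu
      by_cases hnear : ((k:ℝ) + 1/2 < u ∧ u < (k:ℝ) + 3/2)
      · rw [if_pos hnear, abs_mul]
        have hχσ : |(if k + 1 ≤ j then (1:ℝ) else 0)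
            - σ (lam * t + -(lam * (A + ((k:ℝ) + 1/2) * h)))| ≤ 1 + M := by
          have hχ : |(if k + 1 ≤ j then (1:ℝ) else 0)| ≤ 1 := by
            split <;> norm_num
          have hσb := hM (lam * t + -(lam * (A + ((k:ℝ) + 1/2) * h)))
          calc |(if k + 1 ≤ j then (1:ℝ) else 0)
              - σ (lam * t + -(lam * (A + ((k:ℝ) + 1/2) * h)))|
              ≤ |(if k + 1 ≤ j then (1:ℝ) else 0)|
                + |σ (lam * t + -(lam * (A + ((k:ℝ) + 1/2) * h)))| := abs_sub _ _
            _ ≤ 1 + M := add_le_add hχ hσb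
        rw [show h * (M + 1) = h * (1 + M) by ring]
        exact mul_le_mul hΔ hχσ (abs_nonneg _) hh0.le
      · rw [if_neg hnear, abs_mul]
        push_neg at hnear
        rcases le_or_gt u ((k:ℝ) + 1/2) with hfar | hfar
        · have hχ : ¬ (k + 1 ≤ j) := by
            intro hc
            have hcc : ((k:ℝ) + 1) ≤ (j:ℝ) := by exact_mod_cast hc
            linarith
          have hargle : lam * t + -(lam * (A + ((k:ℝ) + 1/2) * h)) ≤ -T := by
            rw [hargk, ← hlamh]
            have h8 : u - (k:ℝ) - 1 ≤ -(1/2) := by linarith only [hfar]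
            calc lam * h * (u - (k:ℝ) - 1) ≤ lam * h * (-(1/2)) :=
                mul_le_mul_of_nonneg_left h8 (mul_nonneg hlam0 hh0.le)
              _ = -(lam * (h/2)) := by ring
          have hσs := hBot _ hargle
          rw [if_neg hχ]
          apply mul_le_mul hΔ ?_ (abs_nonneg _) hh0.le
          rwa [zero_sub, abs_neg]
        · have hu32 : (k:ℝ) + 3/2 ≤ u := hnear hfar
          have hχ : k + 1 ≤ j := by
            rw [hjdef]
            apply Nat.le_floor
            push_cast
            linarith only [hu32]
          have harg2 : T ≤ lam * t + -(lam * (A + ((k:ℝ) + 1/2) * h)) := by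
            rw [hargk, ← hlamh]
            have h8 : (1:ℝ)/2 ≤ u - (k:ℝ) - 1 := by linarith only [hu32]
            calc lam * (h/2) = lam * h * (1/2) := by ring
              _ ≤ lam * h * (u - (k:ℝ) - 1) :=
                mul_le_mul_of_nonneg_left h8 (mul_nonneg hlam0 hh0.le)
          have hσn := hTop _ harg2
          rw [if_pos hχ]
          apply mul_le_mul hΔ ?_ (abs_nonneg _) hh0.le
          rwa [abs_sub_comm]
    refine (Finset.sum_le_sum hterm).trans ?_
    set P : ℕ → Prop := fun k : ℕ => ((k:ℝ) + 1/2 < u ∧ u < (k:ℝ) + 3/2) with hP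
    have hcard1 : ((((Finset.range N).filter P).card : ℕ) : ℝ) ≤ 1 := by
      have hc : ((Finset.range N).filter P).card ≤ 1 := by
        apply Finset.card_le_one.2
        intro p hp q hq
        rw [Finset.mem_filter] at hp hq
        have hp2 := hp.2
        have hq2 := hq.2
        rw [hP] at hp2 hq2
        have h9 : p < q + 1 := by
          have : (p:ℝ) < (q:ℝ) + 1 := by
            linarith [hp2.1, hp2.2, hq2.1, hq2.2]
          exact_mod_cast this
        have h10 : q < p + 1 := by
          have : (q:ℝ) < (p:ℝ) + 1 := by
            linarith [hp2.1, hp2.2, hq2.1, hq2.2]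
          exact_mod_cast this
        omega
      exact_mod_cast hc
    have hcard2 : ((((Finset.range N).filter (fun k => ¬ P k)).card : ℕ) : ℝ) ≤ (N:ℝ) := by
      have hc : ((Finset.range N).filter (fun k => ¬ P k)).card ≤ N := by
        exact le_trans (Finset.card_filter_le _ _) (le_of_eq (Finset.card_range N))
      exact_mod_cast hc
    have hp1 : (0:ℝ) ≤ h * (M + 1) := by positivity
    have hp2 : (0:ℝ) ≤ h * η := by positivity
    rw [← Finset.sum_filter_add_sum_filter_not (Finset.range N) P]
    have hs1 : ∑ k ∈ (Finset.range N).filter P,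
        (if P k then h * (M+1) else h * η) ≤ h * (M + 1) := by
      rw [Finset.sum_congr rfl (fun k hk => if_pos (Finset.mem_filter.mp hk).2),
        Finset.sum_const, nsmul_eq_mul]
      calc (((Finset.range N).filter P).card : ℝ) * (h * (M+1))
          ≤ 1 * (h * (M+1)) := mul_le_mul_of_nonneg_right hcard1 hp1
        _ = h * (M + 1) := one_mul _
    have hs2 : ∑ k ∈ (Finset.range N).filter (fun k => ¬ P k),
        (if P k then h * (M+1) else h * η) ≤ (N:ℝ) * (h * η) := by
      rw [Finset.sum_congr rfl (fun k hk => if_neg (Finset.mem_filter.mp hk).2),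
        Finset.sum_const, nsmul_eq_mul]
      exact mul_le_mul_of_nonneg_right hcard2 hp2
    exact add_le_add hs1 hs2
  have hfin1 : h / 2 + h * (M + 1) ≤ ε / 2 := by
    have e : h * (M+2) - (h/2 + h*(M+1)) = h/2 := by ring
    linarith only [hhε, hh0, e]
  have hfin2 : η + (N:ℝ) * (h * η) ≤ ε / 2 := by
    have h9 := mul_le_mul_of_nonneg_right hNh2 hη0.le
    calc η + (N:ℝ) * (h * η) = (N:ℝ) * h * η + η := by ring
      _ ≤ (D + 2) * η + η := by linarith only [h9]
      _ = η * (D + 3) := by ring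
      _ = ε / 2 := hηD
  linarith only [hX, hY, hZ, hfin1, hfin2]

lemma cos_mul_cos' (X Y : ℝ) : Real.cos X * Real.cos Y
    = 1/2 * Real.cos (X + Y) + 1/2 * Real.cos (X - Y) := by
  rw [Real.cos_add, Real.cos_sub]; ring

/-- Cybenko's theorem: for a continuous, bounded, sigmoidal activation `σ`
(`σ(t) → 1` as `t → ∞`, `σ(t) → 0` as `t → -∞`), the shallow neural networks
are dense in `C([0,1]^d, ℝ)` (with the supremum norm, which induces the
topology of `C(K, ℝ)` for compact `K`). -/
theorem universal_approximation_sigmoidal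
    (σ : ℝ → ℝ) (hcont : Continuous σ)
    (hbdd : ∃ M : ℝ, ∀ t : ℝ, |σ t| ≤ M)
    (hsig_top : Filter.Tendsto σ Filter.atTop (nhds 1))
    (hsig_bot : Filter.Tendsto σ Filter.atBot (nhds 0)) :
    ∀ d : ℕ, 1 ≤ d →
      Dense {g : C(Set.Icc (0 : Fin d → ℝ) 1, ℝ) |
        ∃ (m : ℕ), 1 ≤ m ∧
          ∃ (a : Fin m → ℝ) (w : Fin m → Fin d → ℝ) (b : Fin m → ℝ),
            ∀ x : Set.Icc (0 : Fin d → ℝ) 1,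
              g x = ∑ i : Fin m, a i * σ (∑ j : Fin d, w i j * (x : Fin d → ℝ) j + b i)} := by
  intro d hd
  classical
  have hd0 : (0:ℝ) < (d:ℝ) := by exact_mod_cast Nat.lt_of_lt_of_le Nat.zero_lt_one hd
  set K := Set.Icc (0 : Fin d → ℝ) 1 with hK
  set S : Set C(K, ℝ) := {g : C(K, ℝ) |
        ∃ (m : ℕ), 1 ≤ m ∧
          ∃ (a : Fin m → ℝ) (w : Fin m → Fin d → ℝ) (b : Fin m → ℝ),
            ∀ x : K,
              g x = ∑ i : Fin m, a i * σ (∑ j : Fin d, w i j * (x : Fin d → ℝ) j + b i)}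
    with hS
  show Dense S
  -- bias rewriting
  have hsum_bias : ∀ (w : Fin d → ℝ) (c : ℝ) (x : Fin d → ℝ),
      (∑ j : Fin d, (w j * x j + c / d)) = (∑ j : Fin d, w j * x j) + c := by
    intro w c x
    rw [Finset.sum_add_distrib, Finset.sum_const, Finset.card_univ, Fintype.card_fin,
      nsmul_eq_mul]
    rw [mul_div_cancel₀ _ (ne_of_gt hd0)]
  -- S is a submodule
  have hzero : (0 : C(K,ℝ)) ∈ S := by
    refine ⟨1, le_refl 1, fun _ => 0, fun _ _ => 0, fun _ => 0, fun x => by simp⟩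
  have hadd : ∀ f g : C(K,ℝ), f ∈ S → g ∈ S → f + g ∈ S := by
    rintro f g ⟨m1, hm1, a1, w1, b1, h1⟩ ⟨m2, hm2, a2, w2, b2, h2⟩
    refine ⟨m1 + m2, by omega, Fin.append a1 a2, Fin.append w1 w2, Fin.append b1 b2, ?_⟩
    intro x
    rw [ContinuousMap.add_apply, h1 x, h2 x, Fin.sum_univ_add]
    congr 1
    · exact Finset.sum_congr rfl fun i _ => by simp only [Fin.append_left]
    · exact Finset.sum_congr rfl fun i _ => by simp only [Fin.append_right]
  have hsmul : ∀ (r : ℝ) (f : C(K,ℝ)), f ∈ S → r • f ∈ S := by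
    rintro r f ⟨m, hm, a, w, b, hf⟩
    refine ⟨m, hm, fun i => r * a i, w, b, fun x => ?_⟩
    rw [ContinuousMap.smul_apply, hf x, smul_eq_mul, Finset.mul_sum]
    exact Finset.sum_congr rfl fun i _ => by ring
  let P : Submodule ℝ C(K,ℝ) :=
    { carrier := S
      add_mem' := fun hf hg => hadd _ _ hf hg
      zero_mem' := hzero
      smul_mem' := fun r f hf => hsmul r f hf }
  -- continuity of affine forms
  have hcont_lin : ∀ (w : Fin d → ℝ) (c : ℝ),
      Continuous (fun x : K => (∑ j : Fin d, w j * (x : Fin d → ℝ) j) + c) := by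
    intro w c
    refine Continuous.add ?_ continuous_const
    refine continuous_finset_sum _ fun j _ => ?_
    exact continuous_const.mul ((continuous_apply j).comp continuous_subtype_val)
  let cosF : (Fin d → ℝ) → ℝ → C(K,ℝ) := fun w c =>
    ⟨fun x => Real.cos ((∑ j : Fin d, w j * (x : Fin d → ℝ) j) + c),
     Real.continuous_cos.comp (hcont_lin w c)⟩
  -- cosine ridge functions are in the closure of S
  have hcos_closure : ∀ (w : Fin d → ℝ) (c : ℝ), cosF w c ∈ closure S := by
    intro w c
    rw [Metric.mem_closure_iff]
    intro ε hε
    set W : ℝ := ∑ j : Fin d, |w j| with hW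
    obtain ⟨m, hm, a, s, cc, happrox⟩ :=
      one_dim_approx σ hbdd hsig_top hsig_bot c (-W) W (ε/2) (by positivity)
    have hnetcont : Continuous (fun x : K =>
        ∑ i : Fin m, a i * σ ((∑ j : Fin d, (s i * w j) * (x : Fin d → ℝ) j) + cc i)) := by
      refine continuous_finset_sum _ fun i _ => Continuous.mul continuous_const ?_
      exact hcont.comp (hcont_lin _ _)
    refine ⟨⟨fun x => ∑ i : Fin m, a i * σ ((∑ j : Fin d,
        (s i * w j) * (x : Fin d → ℝ) j) + cc i), hnetcont⟩,
      ⟨m, hm, a, (fun i j => s i * w j), cc, fun x => rfl⟩, ?_⟩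
    rw [ContinuousMap.dist_lt_iff hε]
    intro x
    have hx0 : (0 : Fin d → ℝ) ≤ (x : Fin d → ℝ) := x.2.1
    have hx1 : (x : Fin d → ℝ) ≤ 1 := x.2.2
    set t : ℝ := ∑ j : Fin d, w j * (x : Fin d → ℝ) j with ht
    have htmem : t ∈ Set.Icc (-W) W := by
      have habs : |t| ≤ W := by
        refine (Finset.abs_sum_le_sum_abs _ _).trans ?_
        refine Finset.sum_le_sum fun j _ => ?_
        rw [abs_mul]
        refine mul_le_of_le_one_right (abs_nonneg _) ?_
        rw [abs_le]
        have h0j : (0:ℝ) ≤ (x : Fin d → ℝ) j := by simpa using hx0 j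
        have h1j : (x : Fin d → ℝ) j ≤ 1 := by simpa using hx1 j
        exact ⟨by linarith, h1j⟩
      rw [Set.mem_Icc]
      exact ⟨neg_le_of_abs_le habs, le_of_abs_le habs⟩
    have hinner : ∀ i : Fin m,
        (∑ j : Fin d, (s i * w j) * (x : Fin d → ℝ) j) + cc i = s i * t + cc i := by
      intro i
      congr 1
      rw [ht, Finset.mul_sum]
      exact Finset.sum_congr rfl fun j _ => by ring
    have hdd : dist (cosF w c x) (∑ i : Fin m, a i * σ ((∑ j : Fin d,
        (s i * w j) * (x : Fin d → ℝ) j) + cc i)) ≤ ε / 2 := by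
      rw [Real.dist_eq]
      have e1 : (∑ i : Fin m, a i * σ ((∑ j : Fin d,
          (s i * w j) * (x : Fin d → ℝ) j) + cc i))
          = ∑ i : Fin m, a i * σ (s i * t + cc i) :=
        Finset.sum_congr rfl fun i _ => by rw [hinner i]
      rw [e1]
      exact happrox t htmem
    calc dist (cosF w c x) _ ≤ ε / 2 := hdd
      _ < ε := by linarith
  -- span of cosine ridge functions is a dense subalgebra
  set Scos : Set C(K,ℝ) := {g | ∃ w c, g = cosF w c} with hScos
  set V : Submodule ℝ C(K,ℝ) := Submodule.span ℝ Scos with hV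
  have hone : (1 : C(K,ℝ)) ∈ V := by
    apply Submodule.subset_span
    refine ⟨0, 0, ?_⟩
    ext x
    simp [cosF]
  have hmulgen : ∀ f ∈ Scos, ∀ g ∈ Scos, f * g ∈ V := by
    rintro f ⟨w1, c1, rfl⟩ g ⟨w2, c2, rfl⟩
    have hid : cosF w1 c1 * cosF w2 c2
        = (1/2 : ℝ) • cosF (w1 + w2) (c1 + c2) + (1/2 : ℝ) • cosF (w1 - w2) (c1 - c2) := by
      ext x
      simp only [ContinuousMap.mul_apply, ContinuousMap.add_apply, ContinuousMap.smul_apply,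
        smul_eq_mul, ContinuousMap.coe_mk, cosF]
      have hsum1 : (∑ j : Fin d, (w1 + w2) j * (x : Fin d → ℝ) j)
          = (∑ j : Fin d, w1 j * (x : Fin d → ℝ) j)
            + (∑ j : Fin d, w2 j * (x : Fin d → ℝ) j) := by
        rw [← Finset.sum_add_distrib]
        exact Finset.sum_congr rfl fun j _ => by rw [Pi.add_apply]; ring
      have hsum2 : (∑ j : Fin d, (w1 - w2) j * (x : Fin d → ℝ) j)
          = (∑ j : Fin d, w1 j * (x : Fin d → ℝ) j)
            - (∑ j : Fin d, w2 j * (x : Fin d → ℝ) j) := by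
        rw [← Finset.sum_sub_distrib]
        exact Finset.sum_congr rfl fun j _ => by rw [Pi.sub_apply]; ring
      rw [hsum1, hsum2]
      set p := ∑ j : Fin d, w1 j * (x : Fin d → ℝ) j
      set q := ∑ j : Fin d, w2 j * (x : Fin d → ℝ) j
      rw [show p + q + (c1 + c2) = (p + c1) + (q + c2) by ring,
        show p - q + (c1 - c2) = (p + c1) - (q + c2) by ring]
      exact cos_mul_cos' _ _
    rw [hid]
    exact Submodule.add_mem _
      (Submodule.smul_mem _ _ (Submodule.subset_span ⟨_, _, rfl⟩))
      (Submodule.smul_mem _ _ (Submodule.subset_span ⟨_, _, rfl⟩))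
  have hmul : ∀ f g : C(K,ℝ), f ∈ V → g ∈ V → f * g ∈ V := by
    intro f g hf hg
    have h1 := Submodule.mul_mem_mul hf hg
    rw [hV, Submodule.span_mul_span] at h1
    refine Submodule.span_le.2 ?_ h1
    rintro fg ⟨f', hf', g', hg', rfl⟩
    exact hmulgen f' hf' g' hg'
  let Alg : Subalgebra ℝ C(K,ℝ) := V.toSubalgebra hone hmul
  have hsep : Alg.SeparatesPoints := by
    intro x y hxy
    have hvne : (x : Fin d → ℝ) ≠ (y : Fin d → ℝ) := fun hh => hxy (Subtype.ext hh)
    obtain ⟨j, hj⟩ := Function.ne_iff.mp hvne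
    have hmem : cosF (fun i => if i = j then 1 else 0) 0 ∈ Alg :=
      Submodule.subset_span ⟨_, _, rfl⟩
    refine ⟨⇑(cosF (fun i => if i = j then 1 else 0) 0), ⟨_, hmem, rfl⟩, ?_⟩
    have hval : ∀ z : K, cosF (fun i => if i = j then 1 else 0) 0 z
        = Real.cos ((z : Fin d → ℝ) j) := by
      intro z
      simp only [ContinuousMap.coe_mk, cosF]
      congr 1
      rw [add_zero]
      rw [Finset.sum_eq_single j (fun i _ hne => by rw [if_neg hne, zero_mul])
        (fun hna => absurd (Finset.mem_univ j) hna)]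
      rw [if_pos rfl, one_mul]
    rw [hval x, hval y]
    intro hcc
    have hpi : (1:ℝ) ≤ Real.pi := by linarith [Real.pi_gt_three]
    have hmx : (x : Fin d → ℝ) j ∈ Set.Icc (0:ℝ) Real.pi :=
      ⟨by simpa using x.2.1 j, le_trans (by simpa using x.2.2 j) hpi⟩
    have hmy : (y : Fin d → ℝ) j ∈ Set.Icc (0:ℝ) Real.pi :=
      ⟨by simpa using y.2.1 j, le_trans (by simpa using y.2.2 j) hpi⟩
    exact hj (Real.injOn_cos hmx hmy hcc)
  have htop := ContinuousMap.subalgebra_topologicalClosure_eq_top_of_separatesPoints Alg hsep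
  -- conclude
  have hScos_sub : Scos ⊆ closure S := by
    rintro g ⟨w, c, rfl⟩
    exact hcos_closure w c
  have hV_sub : (V : Set C(K,ℝ)) ⊆ closure S := by
    have hle : V ≤ P.topologicalClosure := by
      rw [hV]
      refine Submodule.span_le.2 ?_
      intro g hg
      have hgc : g ∈ closure S := hScos_sub hg
      have : g ∈ (P.topologicalClosure : Set C(K,ℝ)) := by
        rw [Submodule.topologicalClosure_coe]
        exact hgc
      exact this
    intro g hg
    have h1 : g ∈ (P.topologicalClosure : Set C(K,ℝ)) := hle hg
    rwa [Submodule.topologicalClosure_coe] at h1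
  have hclosure : closure (V : Set C(K,ℝ)) = Set.univ := by
    have h1 := congrArg (fun (B : Subalgebra ℝ C(K,ℝ)) => (B : Set C(K,ℝ))) htop
    rw [Subalgebra.topologicalClosure_coe] at h1
    have h2 : (Alg : Set C(K,ℝ)) = (V : Set C(K,ℝ)) := rfl
    rw [h2] at h1
    rw [h1]
    rfl
  rw [dense_iff_closure_eq]
  apply Set.eq_univ_of_univ_subset
  calc Set.univ = closure (V : Set C(K,ℝ)) := hclosure.symm
    _ ⊆ closure (closure S) := closure_mono hV_sub
    _ = closure S := closure_closure
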